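/- In the setting of the context, for every y in the closed cube ∏_{i=1}^n [0,1]^{K_i}, every i, j ∈ [n], and every ℓ ∈ [K_i]: |T_{i,ℓ}(U⁰(y;j)) − T_{i,ℓ}(y)| ≤ Φ_{i,j}(y) · min{ T_{i,ℓ}(y), T_{i,ℓ}(U⁰(y;j)) }. -/

import Mathlib

open BigOperators

noncomputable section

namespace Meta

variable {n : ℕ} {K : Fin n → ℕ}

/-- Index set for the coordinates: pairs `(i, ℓ)` with `i ∈ [n]`, `ℓ ∈ [K_i]`. -/
abbrev Idx (K : Fin n → ℕ) := Σ i : Fin n, Fin (K i)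

/-- The ambient space `∏_{i=1}^n ℝ^{K_i}`. -/
abbrev Vec (K : Fin n → ℕ) := Idx K → ℝ

/-- The configuration space `Z = ∏_{i=1}^n [K_i]`. -/
abbrev Conf (K : Fin n → ℕ) := (i : Fin n) → Fin (K i)

/-- The closed cube `∏_{i=1}^n [0,1]^{K_i}`. -/
def cube (K : Fin n → ℕ) : Set (Vec K) := {y | ∀ s, 0 ≤ y s ∧ y s ≤ 1}

/-- The open cube `∏_{i=1}^n (0,1)^{K_i}`. -/
def openCube (K : Fin n → ℕ) : Set (Vec K) := {y | ∀ s, 0 < y s ∧ y s < 1}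

/-- `Ŷ`: rows are probability vectors. -/
def Yhat (K : Fin n → ℕ) : Set (Vec K) :=
  {y | y ∈ cube K ∧ ∀ i, ∑ ℓ : Fin (K i), y ⟨i, ℓ⟩ = 1}

/-- One-hot encoding `G(z)`. -/
def onehot (z : Conf K) : Vec K := fun s => if z s.1 = s.2 then 1 else 0

/-- `U¹(y; i, ℓ)`: `y` with its `i`-th row replaced by the `ℓ`-th standard basis vector. -/
def U1 (y : Vec K) (s₀ : Idx K) : Vec K :=
  fun s => if s.1 = s₀.1 then (if s = s₀ then 1 else 0) else y s

/-- `U⁰(y; i)`: `y` with its `i`-th row replaced by the zero vector. -/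
def U0 (y : Vec K) (i₀ : Fin n) : Vec K :=
  fun s => if s.1 = i₀ then 0 else y s

/-- The regularity assumption: `F` is continuous on the closed cube, `F1 s` is the partial
derivative of `F` in coordinate `s` on the open cube, `F2 s s'` is the partial derivative of
`F1 s'` in coordinate `s` on the open cube, and `F1`, `F2` are continuous on the closed cube
(i.e. `F` is C² in the interior and `F` and its first and second order partial derivatives
extend continuously to the boundary). -/
def SmoothData (F : Vec K → ℝ) (F1 : Idx K → Vec K → ℝ)
    (F2 : Idx K → Idx K → Vec K → ℝ) : Prop :=
  ContinuousOn F (cube K) ∧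
  (∀ s, ContinuousOn (F1 s) (cube K)) ∧
  (∀ s s', ContinuousOn (F2 s s') (cube K)) ∧
  (∀ y ∈ openCube K, ∀ s,
      HasDerivAt (fun t => F (Function.update y s t)) (F1 s y) (y s)) ∧
  (∀ y ∈ openCube K, ∀ s s',
      HasDerivAt (fun t => F1 s' (Function.update y s t)) (F2 s s' y) (y s))

/-- `b_{i,ℓ} = sup_{cube} |F_{i,ℓ}|`. -/
def bC (F1 : Idx K → Vec K → ℝ) (s : Idx K) : ℝ :=
  sSup ((fun y => |F1 s y|) '' cube K)

/-- `c_{i,ℓ;j,ℓ'} = sup_{cube} |F_{i,ℓ;j,ℓ'}|`. -/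
def cC (F2 : Idx K → Idx K → Vec K → ℝ) (s s' : Idx K) : ℝ :=
  sSup ((fun y => |F2 s s' y|) '' cube K)

/-- The neighborhood `N^I(y)`: points of the cube differing from `y` in at most two rows. -/
def NI (y : Vec K) : Set (Vec K) :=
  {y' | y' ∈ cube K ∧ ∃ i₀ i₀' : Fin n,
    ∀ s : Idx K, s.1 ≠ i₀ → s.1 ≠ i₀' → y' s = y s}

/-- Local Hessian bound I. -/
def HI (F2 : Idx K → Idx K → Vec K → ℝ) (s s' : Idx K) (y : Vec K) : ℝ :=
  sSup ((fun y' => |F2 s s' y'|) '' NI y)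

/-- The neighborhood `N^II(y, M)`. -/
def NII (y : Vec K) (M : ℝ) : Set (Vec K) :=
  {y' | y' ∈ cube K ∧ ∃ i₀ : Fin n,
    ∀ s : Idx K, s.1 ≠ i₀ → (M⁻¹ * y s ≤ y' s ∧ y' s ≤ M * y s)}

/-- Local Hessian bound II. -/
def HII (F2 : Idx K → Idx K → Vec K → ℝ) (s s' : Idx K) (y : Vec K) (M : ℝ) : ℝ :=
  sSup ((fun y' => |F2 s s' y'|) '' NII y M)

/-- `M_j = exp(2 max_{i,ℓ,ℓ'} c_{i,ℓ;j,ℓ'})`. -/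
def Mc (F2 : Idx K → Idx K → Vec K → ℝ) (j : Fin n) : ℝ :=
  Real.exp (2 * ⨆ i : Fin n, ⨆ ℓ : Fin (K i), ⨆ ℓ' : Fin (K j), cC F2 ⟨i, ℓ⟩ ⟨j, ℓ'⟩)

/-- `Φ_{i,j}(y)`. -/
def Phi (F2 : Idx K → Idx K → Vec K → ℝ) (i j : Fin n) (y : Vec K) : ℝ :=
  Real.exp (2 * ∑ ℓ' : Fin (K j), (⨆ ℓ : Fin (K i), HI F2 ⟨i, ℓ⟩ ⟨j, ℓ'⟩ y) * y ⟨j, ℓ'⟩) - 1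

/-- The smoothness term `E₁`. -/
def E1 (F2 : Idx K → Idx K → Vec K → ℝ) : ℝ :=
  (⨆ y ∈ Yhat K, ∑ i : Fin n, ⨆ j : Fin n, Phi F2 j i y) *
      (⨆ y ∈ Yhat K, ⨆ s : Idx K, ∑ s' : Idx K, HII F2 s s' y (Mc F2 s.1) * y s') +
    ⨆ y ∈ Yhat K, ∑ i : Fin n, ⨆ ℓ : Fin (K i),
      ∑ ℓ' : Fin (K i), HII F2 ⟨i, ℓ⟩ ⟨i, ℓ'⟩ y (Mc F2 i) * y ⟨i, ℓ'⟩

/-- `Λ(t) = log(2 + (∑_i max_ℓ b_{i,ℓ})/t)`. -/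
def Lam (F1 : Idx K → Vec K → ℝ) (t : ℝ) : ℝ :=
  Real.log (2 + (∑ i : Fin n, ⨆ ℓ : Fin (K i), bC F1 ⟨i, ℓ⟩) / t)

/-- `I(y) = ∑_{i,ℓ} y_{i,ℓ} log(y_{i,ℓ}/μ_i(ℓ))` (with `0 log 0 = 0`). -/
def Ifun (μ : (i : Fin n) → Fin (K i) → ℝ) (y : Vec K) : ℝ :=
  ∑ s : Idx K, y s * Real.log (y s / μ s.1 s.2)

/-- The product base measure `μ(z) = ∏ᵢ μᵢ(zᵢ)`. -/
def muProd (μ : (i : Fin n) → Fin (K i) → ℝ) (z : Conf K) : ℝ :=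
  ∏ i, μ i (z i)

/-- The partition function `S = ∑_z e^{f(z)} μ(z)`. -/
def Spart (μ : (i : Fin n) → Fin (K i) → ℝ) (f : Conf K → ℝ) : ℝ :=
  ∑ z : Conf K, Real.exp (f z) * muProd μ z

/-- The (collapsed) posterior `P(z) = e^{f(z)} μ(z) / S`. -/
def Ppost (μ : (i : Fin n) → Fin (K i) → ℝ) (f : Conf K → ℝ) (z : Conf K) : ℝ :=
  Real.exp (f z) * muProd μ z / Spart μ f

/-- The product distribution `Q_y(z) = ∏ᵢ y_{i,zᵢ}`. -/
def Qy (y : Vec K) (z : Conf K) : ℝ := ∏ i, y ⟨i, z i⟩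

/-- KL divergence of probability mass functions on the finite configuration space
(here the second argument is everywhere positive, and `0·log(0/p) = 0` holds automatically). -/
def KLfin (Q P : Conf K → ℝ) : ℝ := ∑ z : Conf K, Q z * Real.log (Q z / P z)

/-- `D` is an `ε`-cover for `F`. -/
def IsCover (F : Vec K → ℝ) (ε : ℝ) (Dc : Finset (Vec K)) : Prop :=
  ∀ y ∈ Yhat K, ∃ d ∈ Dc,
    ∑ i : Fin n, ⨆ ℓ : Fin (K i), |F (U1 y ⟨i, ℓ⟩) - F (U0 y i) - d ⟨i, ℓ⟩| ≤ ε

end Meta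

namespace Meta

variable {n : ℕ} {K : Fin n → ℕ}

/-- `T_{i,ℓ}(y)`: the conditional probability of one coordinate given the others. -/
def Tmap (μ : (i : Fin n) → Fin (K i) → ℝ) (F : Vec K → ℝ) (y : Vec K) : Vec K :=
  fun s =>
    Real.exp (F (U1 y s)) * μ s.1 s.2 /
      ∑ s' : Fin (K s.1), Real.exp (F (U1 y ⟨s.1, s'⟩)) * μ s.1 s'

section Helpers

variable {n : ℕ} {K : Fin n → ℕ}

lemma cube_eq_pi : cube K = Set.pi Set.univ (fun _ : Idx K => Set.Icc (0:ℝ) 1) := by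
  ext y
  simp only [cube, Set.mem_setOf_eq, Set.mem_pi, Set.mem_univ, Set.mem_Icc, true_implies]

lemma isCompact_cube : IsCompact (cube K) := by
  rw [cube_eq_pi]
  exact isCompact_univ_pi fun _ => isCompact_Icc

lemma NI_subset_cube (y : Vec K) : NI y ⊆ cube K := fun _ h => h.1

lemma abs_F2_le_HI {F2 : Idx K → Idx K → Vec K → ℝ}
    (hF2 : ∀ s s', ContinuousOn (F2 s s') (cube K))
    (s s' : Idx K) (y : Vec K) {y' : Vec K} (hy' : y' ∈ NI y) :
    |F2 s s' y'| ≤ HI F2 s s' y := by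
  apply le_csSup
  · exact BddAbove.mono (Set.image_mono (NI_subset_cube y))
      (isCompact_cube.bddAbove_image ((hF2 s s').abs))
  · exact ⟨y', hy', rfl⟩

/-- Squeezed rectangle point. -/
def sq (ε : ℝ) (w : Vec K) (a b : Idx K) (t u : ℝ) : Vec K :=
  Function.update (Function.update (fun r => ε + (1 - 2*ε) * w r) a (ε + (1-2*ε)*t))
    b (ε + (1-2*ε)*u)

lemma sq_apply_b (ε : ℝ) (w : Vec K) (a b : Idx K) (t u : ℝ) :
    sq ε w a b t u b = ε + (1-2*ε)*u := by simp [sq]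

lemma sq_apply_a (ε : ℝ) (w : Vec K) {a b : Idx K} (hab : a ≠ b) (t u : ℝ) :
    sq ε w a b t u a = ε + (1-2*ε)*t := by
  rw [sq, Function.update_of_ne hab, Function.update_self]

lemma sq_apply_other (ε : ℝ) (w : Vec K) {a b : Idx K} {r : Idx K}
    (hra : r ≠ a) (hrb : r ≠ b) (t u : ℝ) :
    sq ε w a b t u r = ε + (1-2*ε) * w r := by
  rw [sq, Function.update_of_ne hrb, Function.update_of_ne hra]

lemma sq_comm (ε : ℝ) (w : Vec K) {a b : Idx K} (hab : a ≠ b) (t u : ℝ) :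
    sq ε w a b t u = Function.update
      (Function.update (fun r => ε + (1 - 2*ε) * w r) b (ε + (1-2*ε)*u)) a (ε + (1-2*ε)*t) :=
  Function.update_comm hab _ _ _

lemma secondDiff_eps
    (F : Vec K → ℝ) (F1 : Idx K → Vec K → ℝ) (F2 : Idx K → Idx K → Vec K → ℝ)
    (hsm : SmoothData F F1 F2)
    (w : Vec K) (hw : w ∈ cube K) (a b : Idx K) (hab : a ≠ b)
    {ε : ℝ} (hε0 : 0 < ε) (hε2 : ε < 1/2)
    {α β γ δ : ℝ} (hα : α ∈ Set.Icc (0:ℝ) 1) (hβ : β ∈ Set.Icc (0:ℝ) 1)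
    (hγ : γ ∈ Set.Icc (0:ℝ) 1) (hδ : δ ∈ Set.Icc (0:ℝ) 1)
    {C : ℝ} (hC0 : 0 ≤ C)
    (hC : ∀ t ∈ Set.Icc (0:ℝ) 1, ∀ u ∈ Set.Icc (0:ℝ) 1, |F2 a b (sq ε w a b t u)| ≤ C) :
    |F (sq ε w a b β δ) - F (sq ε w a b α δ) - F (sq ε w a b β γ) + F (sq ε w a b α γ)|
      ≤ C * |β - α| * |δ - γ| := by
  have h2ε : (0:ℝ) ≤ 1 - 2*ε := by linarith
  have hmemIoo : ∀ x ∈ Set.Icc (0:ℝ) 1, ε + (1-2*ε)*x ∈ Set.Ioo (0:ℝ) 1 := by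
    intro x hx
    constructor
    · nlinarith [hx.1, hx.2]
    · nlinarith [hx.1, hx.2]
  have hopen : ∀ t ∈ Set.Icc (0:ℝ) 1, ∀ u ∈ Set.Icc (0:ℝ) 1,
      sq ε w a b t u ∈ openCube K := by
    intro t ht u hu r
    rcases eq_or_ne r b with rfl | hrb
    · rw [sq_apply_b]
      exact hmemIoo u hu
    · rcases eq_or_ne r a with rfl | hra
      · rw [sq_apply_a ε w hrb]
        exact hmemIoo t ht
      · rw [sq_apply_other ε w hra hrb]
        exact hmemIoo (w r) ⟨(hw r).1, (hw r).2⟩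
  have hc : ∀ x : ℝ, HasDerivAt (fun v : ℝ => ε + (1-2*ε)*v) (1-2*ε) x := by
    intro x
    simpa using ((hasDerivAt_id x).const_mul (1-2*ε)).const_add ε
  -- derivative in the `u` (b-coordinate) direction
  have hdu : ∀ t ∈ Set.Icc (0:ℝ) 1, ∀ u ∈ Set.Icc (0:ℝ) 1,
      HasDerivAt (fun v => F (sq ε w a b t v)) ((1-2*ε) * F1 b (sq ε w a b t u)) u := by
    intro t ht u hu
    have hpt := hsm.2.2.2.1 _ (hopen t ht u hu) b
    have e1 : (sq ε w a b t u) b = ε + (1-2*ε)*u := sq_apply_b ..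
    have e2 : (fun v => F (Function.update (sq ε w a b t u) b v))
        = fun v => F (Function.update
            (Function.update (fun r => ε + (1 - 2*ε) * w r) a (ε + (1-2*ε)*t)) b v) := by
      funext v
      rw [sq, Function.update_idem]
    rw [e1, e2] at hpt
    have hcomp := HasDerivAt.comp u hpt (hc u)
    have e3 : ((fun v => F (Function.update
          (Function.update (fun r => ε + (1 - 2*ε) * w r) a (ε + (1-2*ε)*t)) b v))
          ∘ (fun v : ℝ => ε + (1-2*ε)*v)) = fun v => F (sq ε w a b t v) := by
      funext v
      simp only [Function.comp, sq]
    rw [e3] at hcomp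
    simpa [mul_comm] using hcomp
  -- derivative of F1 b in the `t` (a-coordinate) direction
  have hdt : ∀ u ∈ Set.Icc (0:ℝ) 1, ∀ t ∈ Set.Icc (0:ℝ) 1,
      HasDerivAt (fun v => F1 b (sq ε w a b v u)) ((1-2*ε) * F2 a b (sq ε w a b t u)) t := by
    intro u hu t ht
    have hpt := hsm.2.2.2.2 _ (hopen t ht u hu) a b
    have e1 : (sq ε w a b t u) a = ε + (1-2*ε)*t := sq_apply_a ε w hab ..
    have e2 : (fun v => F1 b (Function.update (sq ε w a b t u) a v))
        = fun v => F1 b (Function.update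
            (Function.update (fun r => ε + (1 - 2*ε) * w r) b (ε + (1-2*ε)*u)) a v) := by
      funext v
      rw [sq_comm ε w hab, Function.update_idem]
    rw [e1, e2] at hpt
    have hcomp := HasDerivAt.comp t hpt (hc t)
    have e3 : ((fun v => F1 b (Function.update
          (Function.update (fun r => ε + (1 - 2*ε) * w r) b (ε + (1-2*ε)*u)) a v))
          ∘ (fun v : ℝ => ε + (1-2*ε)*v)) = fun v => F1 b (sq ε w a b v u) := by
      funext v
      simp only [Function.comp]
      rw [← sq_comm ε w hab]
    rw [e3] at hcomp
    simpa [mul_comm] using hcomp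
  have hIcc : Convex ℝ (Set.Icc (0:ℝ) 1) := convex_Icc 0 1
  have inner : ∀ u ∈ Set.Icc (0:ℝ) 1,
      |F1 b (sq ε w a b β u) - F1 b (sq ε w a b α u)| ≤ (1-2*ε) * C * |β - α| := by
    intro u hu
    have h : ‖(fun v => F1 b (sq ε w a b v u)) β - (fun v => F1 b (sq ε w a b v u)) α‖
        ≤ ((1-2*ε) * C) * ‖β - α‖ := by
      refine Convex.norm_image_sub_le_of_norm_hasDerivWithin_le
        (f' := fun v => (1-2*ε) * F2 a b (sq ε w a b v u))
        (fun t ht => (hdt u hu t ht).hasDerivWithinAt)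
        (fun t ht => ?_) hIcc hα hβ
      show ‖(1-2*ε) * F2 a b (sq ε w a b t u)‖ ≤ (1-2*ε) * C
      rw [Real.norm_eq_abs, abs_mul, abs_of_nonneg h2ε]
      exact mul_le_mul_of_nonneg_left (hC t ht u hu) h2ε
    simpa [Real.norm_eq_abs, mul_assoc] using h
  have outer : ‖(fun u => F (sq ε w a b β u) - F (sq ε w a b α u)) δ
      - (fun u => F (sq ε w a b β u) - F (sq ε w a b α u)) γ‖ ≤ (C * |β - α|) * ‖δ - γ‖ := by
    refine Convex.norm_image_sub_le_of_norm_hasDerivWithin_le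
      (f' := fun u => (1-2*ε) * F1 b (sq ε w a b β u) - (1-2*ε) * F1 b (sq ε w a b α u))
      (fun u hu => ((hdu β hβ u hu).sub (hdu α hα u hu)).hasDerivWithinAt)
      (fun u hu => ?_) hIcc hγ hδ
    show ‖(1-2*ε) * F1 b (sq ε w a b β u) - (1-2*ε) * F1 b (sq ε w a b α u)‖ ≤ C * |β - α|
    rw [← mul_sub, Real.norm_eq_abs, abs_mul, abs_of_nonneg h2ε]
    have h1 := inner u hu
    have h2 : (1-2*ε) ≤ 1 := by linarith
    nlinarith [mul_nonneg hC0 (abs_nonneg (β - α)),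
      abs_nonneg (F1 b (sq ε w a b β u) - F1 b (sq ε w a b α u))]
  have e4 : F (sq ε w a b β δ) - F (sq ε w a b α δ) - F (sq ε w a b β γ) + F (sq ε w a b α γ)
      = (F (sq ε w a b β δ) - F (sq ε w a b α δ)) - (F (sq ε w a b β γ) - F (sq ε w a b α γ)) := by
    ring
  rw [e4]
  simpa [Real.norm_eq_abs, mul_assoc] using outer

end Helpers

section HelpersB

variable {n : ℕ} {K : Fin n → ℕ}

/-- Rectangle point. -/
def rect (w : Vec K) (a b : Idx K) (t u : ℝ) : Vec K :=
  Function.update (Function.update w a t) b u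

lemma rect_apply_b (w : Vec K) (a b : Idx K) (t u : ℝ) : rect w a b t u b = u := by
  rw [rect, Function.update_self]

lemma rect_apply_a (w : Vec K) {a b : Idx K} (hab : a ≠ b) (t u : ℝ) :
    rect w a b t u a = t := by
  rw [rect, Function.update_of_ne hab, Function.update_self]

lemma rect_apply_other (w : Vec K) {a b r : Idx K} (hra : r ≠ a) (hrb : r ≠ b) (t u : ℝ) :
    rect w a b t u r = w r := by
  rw [rect, Function.update_of_ne hrb, Function.update_of_ne hra]

lemma secondDiff_bound
    (F : Vec K → ℝ) (F1 : Idx K → Vec K → ℝ) (F2 : Idx K → Idx K → Vec K → ℝ)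
    (hsm : SmoothData F F1 F2)
    (w : Vec K) (hw : w ∈ cube K) (a b : Idx K) (hab : a ≠ b)
    {α β γ δ : ℝ} (hα : α ∈ Set.Icc (0:ℝ) 1) (hβ : β ∈ Set.Icc (0:ℝ) 1)
    (hγ : γ ∈ Set.Icc (0:ℝ) 1) (hδ : δ ∈ Set.Icc (0:ℝ) 1) {H : ℝ}
    (hH : ∀ q ∈ cube K, (∀ r, r ≠ a → r ≠ b → q r = w r) → |F2 a b q| ≤ H) :
    |F (rect w a b β δ) - F (rect w a b α δ) - F (rect w a b β γ) + F (rect w a b α γ)|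
      ≤ H * |β - α| * |δ - γ| := by
  have hQb : ∀ t u, rect w a b t u b = u := fun t u => rect_apply_b w a b t u
  have hQa : ∀ t u, rect w a b t u a = t := fun t u => rect_apply_a w hab t u
  have hQo : ∀ t u, ∀ r, r ≠ a → r ≠ b → rect w a b t u r = w r :=
    fun t u r hra hrb => rect_apply_other w hra hrb t u
  have hQcube : ∀ t ∈ Set.Icc (0:ℝ) 1, ∀ u ∈ Set.Icc (0:ℝ) 1, rect w a b t u ∈ cube K := by
    intro t ht u hu r
    rcases eq_or_ne r b with rfl | hrb
    · rw [hQb]; exact ⟨hu.1, hu.2⟩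
    · rcases eq_or_ne r a with rfl | hra
      · rw [hQa]; exact ⟨ht.1, ht.2⟩
      · rw [hQo t u r hra hrb]; exact hw r
  have h01 : (0:ℝ) ∈ Set.Icc (0:ℝ) 1 := Set.left_mem_Icc.2 zero_le_one
  have hH0 : 0 ≤ H :=
    le_trans (abs_nonneg _) (hH (rect w a b 0 0) (hQcube 0 h01 0 h01) (hQo 0 0))
  have hP1 : |β - α| ≤ 1 :=
    abs_le.2 ⟨by linarith [hα.1, hα.2, hβ.1, hβ.2], by linarith [hα.1, hα.2, hβ.1, hβ.2]⟩
  have hP2 : |δ - γ| ≤ 1 :=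
    abs_le.2 ⟨by linarith [hγ.1, hγ.2, hδ.1, hδ.2], by linarith [hγ.1, hγ.2, hδ.1, hδ.2]⟩
  refine le_of_forall_pos_le_add fun d hd => ?_
  obtain ⟨η₂, hη₂0, hη₂⟩ := Metric.uniformContinuousOn_iff.1
    (isCompact_cube.uniformContinuousOn_of_continuous (hsm.2.2.1 a b)) (d/2) (by linarith)
  obtain ⟨ηF, hηF0, hηF⟩ := Metric.uniformContinuousOn_iff.1
    (isCompact_cube.uniformContinuousOn_of_continuous hsm.1) (d/8) (by linarith)
  set ε : ℝ := min (min η₂ ηF) 1 / 4 with hεdef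
  have hε0 : 0 < ε := by
    apply div_pos (lt_min (lt_min hη₂0 hηF0) one_pos); norm_num
  have hε2 : ε < 1/2 := by
    have : min (min η₂ ηF) 1 ≤ 1 := min_le_right _ _
    rw [hεdef]; linarith
  have hεη₂ : ε < η₂ := by
    have h1 : min (min η₂ ηF) 1 ≤ η₂ := le_trans (min_le_left _ _) (min_le_left _ _)
    rw [hεdef]; linarith
  have hεηF : ε < ηF := by
    have h1 : min (min η₂ ηF) 1 ≤ ηF := le_trans (min_le_left _ _) (min_le_right _ _)
    rw [hεdef]; linarith
  have h2ε : (0:ℝ) ≤ 1 - 2*ε := by linarith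
  have hsqQ : ∀ t u r, sq ε w a b t u r = ε + (1-2*ε) * rect w a b t u r := by
    intro t u r
    rcases eq_or_ne r b with rfl | hrb
    · rw [sq_apply_b, hQb]
    · rcases eq_or_ne r a with rfl | hra
      · rw [sq_apply_a ε w hab, hQa]
      · rw [sq_apply_other ε w hra hrb, hQo t u r hra hrb]
  have hdist : ∀ t ∈ Set.Icc (0:ℝ) 1, ∀ u ∈ Set.Icc (0:ℝ) 1,
      dist (sq ε w a b t u) (rect w a b t u) ≤ ε := by
    intro t ht u hu
    rw [dist_pi_le_iff hε0.le]
    intro r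
    rw [Real.dist_eq, hsqQ]
    have h01r := hQcube t ht u hu r
    have e : ε + (1-2*ε) * rect w a b t u r - rect w a b t u r = ε * (1 - 2 * rect w a b t u r) := by ring
    rw [e, abs_mul, abs_of_nonneg hε0.le]
    have habs : |1 - 2 * rect w a b t u r| ≤ 1 := abs_le.2 ⟨by linarith [h01r.2], by linarith [h01r.1]⟩
    nlinarith [hε0.le]
  have hsqcube : ∀ t ∈ Set.Icc (0:ℝ) 1, ∀ u ∈ Set.Icc (0:ℝ) 1, sq ε w a b t u ∈ cube K := by
    intro t ht u hu r
    rw [hsqQ]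
    have h01r := hQcube t ht u hu r
    constructor
    · nlinarith [h01r.1]
    · nlinarith [h01r.2]
  have hC : ∀ t ∈ Set.Icc (0:ℝ) 1, ∀ u ∈ Set.Icc (0:ℝ) 1,
      |F2 a b (sq ε w a b t u)| ≤ H + d/2 := by
    intro t ht u hu
    have h1 := hη₂ _ (hsqcube t ht u hu) _ (hQcube t ht u hu)
      (lt_of_le_of_lt (hdist t ht u hu) hεη₂)
    rw [Real.dist_eq] at h1
    have h2 := hH (rect w a b t u) (hQcube t ht u hu) (hQo t u)
    have h3 := abs_sub_abs_le_abs_sub (F2 a b (sq ε w a b t u)) (F2 a b (rect w a b t u))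
    linarith [abs_lt.1 h1, h3]
  have hA := secondDiff_eps F F1 F2 hsm w hw a b hab hε0 hε2 hα hβ hγ hδ
    (by linarith : (0:ℝ) ≤ H + d/2) hC
  have hFc : ∀ t ∈ Set.Icc (0:ℝ) 1, ∀ u ∈ Set.Icc (0:ℝ) 1,
      |F (sq ε w a b t u) - F (rect w a b t u)| ≤ d/8 := by
    intro t ht u hu
    have h1 := hηF _ (hsqcube t ht u hu) _ (hQcube t ht u hu)
      (lt_of_le_of_lt (hdist t ht u hu) hεηF)
    rw [Real.dist_eq] at h1
    linarith
  have hbd := hFc β hβ δ hδ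
  have had := hFc α hα δ hδ
  have hbg := hFc β hβ γ hγ
  have hag := hFc α hα γ hγ
  have hPP : |β - α| * |δ - γ| ≤ 1 :=
    mul_le_one₀ hP1 (abs_nonneg _) hP2
  have hYle := le_abs_self (F (sq ε w a b β δ) - F (sq ε w a b α δ)
      - F (sq ε w a b β γ) + F (sq ε w a b α γ))
  have hYge := neg_abs_le (F (sq ε w a b β δ) - F (sq ε w a b α δ)
      - F (sq ε w a b β γ) + F (sq ε w a b α γ))
  have goalabs : |F (rect w a b β δ) - F (rect w a b α δ) - F (rect w a b β γ) + F (rect w a b α γ)|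
      ≤ (H + d/2) * |β - α| * |δ - γ| + d/2 := by
    rw [abs_le]
    constructor
    · have := abs_le.1 hbd; have := abs_le.1 had; have := abs_le.1 hbg; have := abs_le.1 hag
      linarith [hYge, hA]
    · have := abs_le.1 hbd; have := abs_le.1 had; have := abs_le.1 hbg; have := abs_le.1 hag
      linarith [hYle, hA]
  have hd2 : (d/2) * (|β - α| * |δ - γ|) ≤ (d/2) * 1 :=
    mul_le_mul_of_nonneg_left hPP (by linarith)
  have hfin : (H + d/2) * |β - α| * |δ - γ| + d/2 ≤ H * |β - α| * |δ - γ| + d := by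
    have e : (H + d/2) * |β - α| * |δ - γ|
        = H * |β - α| * |δ - γ| + (d/2) * (|β - α| * |δ - γ|) := by ring
    rw [e]
    linarith
  linarith [goalabs]

end HelpersB

section HelpersC

variable {n : ℕ} {K : Fin n → ℕ}

lemma delta_bound
    (F : Vec K → ℝ) (F1 : Idx K → Vec K → ℝ) (F2 : Idx K → Idx K → Vec K → ℝ)
    (hsm : SmoothData F F1 F2)
    (y : Vec K) (hy : y ∈ cube K) (i j : Fin n) (hij : i ≠ j) (s s' : Fin (K i)) :
    |(F (U1 y ⟨i,s⟩) - F (U1 (U0 y j) ⟨i,s⟩)) - (F (U1 y ⟨i,s'⟩) - F (U1 (U0 y j) ⟨i,s'⟩))|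
      ≤ 2 * ∑ ℓ' : Fin (K j), (⨆ ℓ : Fin (K i), HI F2 ⟨i,ℓ⟩ ⟨j,ℓ'⟩ y) * y ⟨j,ℓ'⟩ := by
  have hyNI : y ∈ NI y := ⟨hy, i, i, fun _ _ _ => rfl⟩
  have hHInn : ∀ (p q : Idx K), 0 ≤ HI F2 p q y := fun p q =>
    le_trans (abs_nonneg _) (abs_F2_le_HI hsm.2.2.1 p q y hyNI)
  have hbdd : ∀ q : Idx K, BddAbove (Set.range fun ℓ : Fin (K i) => HI F2 ⟨i,ℓ⟩ q y) :=
    fun q => Set.Finite.bddAbove (Set.finite_range _)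
  have hsupnn : ∀ ℓ' : Fin (K j), 0 ≤ ⨆ ℓ : Fin (K i), HI F2 ⟨i,ℓ⟩ ⟨j,ℓ'⟩ y := fun ℓ' =>
    le_ciSup_of_le (hbdd _) s (hHInn _ _)
  have hRHSnn : 0 ≤ 2 * ∑ ℓ' : Fin (K j), (⨆ ℓ : Fin (K i), HI F2 ⟨i,ℓ⟩ ⟨j,ℓ'⟩ y) * y ⟨j,ℓ'⟩ := by
    apply mul_nonneg (by norm_num)
    exact Finset.sum_nonneg fun ℓ' _ => mul_nonneg (hsupnn ℓ') (hy _).1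
  by_cases hss : s = s'
  · subst hss
    simpa using hRHSnn
  -- main case
  set W : ℕ → Vec K := fun m r =>
    if r = (⟨i,s⟩ : Idx K) ∨ r = (⟨i,s'⟩ : Idx K) then 1
    else if r.1 = i then 0
    else if r.1 = j then (if (r.2 : ℕ) < m then y r else 0)
    else y r with hW
  have hne_is : ∀ (m : ℕ) (hm : m < K j) (c : Fin (K i)),
      (⟨j, ⟨m, hm⟩⟩ : Idx K) ≠ ⟨i, c⟩ := by
    intro m hm c h
    exact hij (congrArg Sigma.fst h).symm
  have hWb : ∀ (m : ℕ) (hm : m < K j), W m ⟨j, ⟨m, hm⟩⟩ = 0 := by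
    intro m hm
    rw [hW]
    dsimp only
    rw [if_neg (by simp [hne_is m hm s, hne_is m hm s'])]
    rw [if_neg (show ¬ (j = i) from Ne.symm hij)]
    rw [if_pos rfl, if_neg (lt_irrefl m)]
  have hWcube : ∀ m, W m ∈ cube K := by
    intro m r
    rw [hW]
    dsimp only
    split_ifs
    · exact ⟨zero_le_one, le_refl 1⟩
    · exact ⟨le_refl 0, zero_le_one⟩
    · exact hy r
    · exact ⟨le_refl 0, zero_le_one⟩
    · exact hy r
  have hWagree : ∀ (m : ℕ) (r : Idx K), r.1 ≠ i → r.1 ≠ j → W m r = y r := by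
    intro m r h1 h2
    have e1 : r ≠ ⟨i,s⟩ := fun h => h1 (congrArg Sigma.fst h)
    have e2 : r ≠ ⟨i,s'⟩ := fun h => h1 (congrArg Sigma.fst h)
    rw [hW]
    dsimp only
    rw [if_neg (by simp [e1, e2]), if_neg h1, if_neg h2]
  have hWA : ∀ (m : ℕ) (c : Fin (K i)), c = s ∨ c = s' → W m ⟨i,c⟩ = 1 := by
    intro m c hc
    have hd : ((⟨i,c⟩ : Idx K) = ⟨i,s⟩ ∨ (⟨i,c⟩ : Idx K) = ⟨i,s'⟩) := by
      rcases hc with rfl | rfl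
      · exact Or.inl rfl
      · exact Or.inr rfl
    rw [hW]
    dsimp only
    rw [if_pos hd]
  have hWsucc : ∀ (m : ℕ) (hm : m < K j),
      W (m+1) = Function.update (W m) ⟨j,⟨m,hm⟩⟩ (y ⟨j,⟨m,hm⟩⟩) := by
    intro m hm
    funext r
    by_cases hr : r = (⟨j,⟨m,hm⟩⟩ : Idx K)
    · subst hr
      rw [Function.update_self, hW]
      dsimp only
      rw [if_neg (by simp [hne_is m hm s, hne_is m hm s'])]
      rw [if_neg (by exact hij.symm : ¬ (j = i))]
      rw [if_pos rfl, if_pos (Nat.lt_succ_self m)]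
    · rw [Function.update_of_ne hr, hW]
      dsimp only
      by_cases hd : r = (⟨i,s⟩ : Idx K) ∨ r = (⟨i,s'⟩ : Idx K)
      · rw [if_pos hd, if_pos hd]
      · rw [if_neg hd, if_neg hd]
        by_cases hri : r.1 = i
        · rw [if_pos hri, if_pos hri]
        · rw [if_neg hri, if_neg hri]
          by_cases hrj : r.1 = j
          · rw [if_pos hrj, if_pos hrj]
            have hneq : (r.2 : ℕ) ≠ m := by
              intro hval
              apply hr
              rcases r with ⟨r1, r2⟩
              dsimp only at hrj
              subst hrj
              dsimp only at hval
              rw [show r2 = ⟨m, hm⟩ from Fin.ext hval]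
            by_cases hlt : (r.2 : ℕ) < m
            · rw [if_pos hlt, if_pos (Nat.lt_succ_of_lt hlt)]
            · rw [if_neg hlt, if_neg (by omega)]
          · rw [if_neg hrj, if_neg hrj]
  -- endpoint identification
  have hupd_end : ∀ (m : ℕ) (a c : Fin (K i)), ((a = s ∧ c = s') ∨ (a = s' ∧ c = s)) →
      ∀ r : Idx K, Function.update (W m) ⟨i,c⟩ 0 r =
        if r = (⟨i,a⟩ : Idx K) then 1
        else if r.1 = i then 0
        else if r.1 = j then (if (r.2 : ℕ) < m then y r else 0)
        else y r := by
    intro m a c hac r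
    have hfin_ne : a ≠ c := by
      rcases hac with ⟨rfl, rfl⟩ | ⟨rfl, rfl⟩
      · exact hss
      · exact Ne.symm hss
    have hAC : (⟨i,a⟩ : Idx K) ≠ ⟨i,c⟩ := by
      intro h
      apply hfin_ne
      simpa using h
    by_cases hr : r = (⟨i,c⟩ : Idx K)
    · subst hr
      rw [Function.update_self]
      rw [if_neg (Ne.symm hAC), if_pos rfl]
    · rw [Function.update_of_ne hr, hW]
      dsimp only
      have hdisj : (r = (⟨i,s⟩ : Idx K) ∨ r = (⟨i,s'⟩ : Idx K)) ↔ r = (⟨i,a⟩ : Idx K) := by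
        rcases hac with ⟨rfl, rfl⟩ | ⟨rfl, rfl⟩
        · constructor
          · rintro (h | h)
            · exact h
            · exact absurd h hr
          · exact Or.inl
        · constructor
          · rintro (h | h)
            · exact absurd h hr
            · exact h
          · exact Or.inr
      rw [if_congr hdisj rfl rfl]
  have hWtop : ∀ (a c : Fin (K i)), ((a = s ∧ c = s') ∨ (a = s' ∧ c = s)) →
      Function.update (W (K j)) ⟨i,c⟩ 0 = U1 y ⟨i,a⟩ := by
    intro a c hac
    funext r
    rw [hupd_end (K j) a c hac r]
    show _ = if r.1 = (⟨i,a⟩ : Idx K).1 then (if r = ⟨i,a⟩ then 1 else 0) else y r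
    by_cases h1 : r = (⟨i,a⟩ : Idx K)
    · subst h1
      simp
    · rw [if_neg h1]
      by_cases h2 : r.1 = i
      · rw [if_pos h2, if_pos h2, if_neg h1]
      · rw [if_neg h2, if_neg h2]
        by_cases h3 : r.1 = j
        · have : (r.2 : ℕ) < K j := h3 ▸ r.2.isLt
          rw [if_pos h3, if_pos this]
        · rw [if_neg h3]
  have hWbot : ∀ (a c : Fin (K i)), ((a = s ∧ c = s') ∨ (a = s' ∧ c = s)) →
      Function.update (W 0) ⟨i,c⟩ 0 = U1 (U0 y j) ⟨i,a⟩ := by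
    intro a c hac
    funext r
    rw [hupd_end 0 a c hac r]
    show _ = if r.1 = (⟨i,a⟩ : Idx K).1 then (if r = ⟨i,a⟩ then 1 else 0) else U0 y j r
    show _ = if r.1 = i then (if r = ⟨i,a⟩ then 1 else 0) else (if r.1 = j then 0 else y r)
    by_cases h1 : r = (⟨i,a⟩ : Idx K)
    · subst h1
      simp
    · rw [if_neg h1]
      by_cases h2 : r.1 = i
      · rw [if_pos h2, if_pos h2, if_neg h1]
      · rw [if_neg h2, if_neg h2]
        by_cases h3 : r.1 = j
        · rw [if_pos h3, if_pos h3, if_neg (Nat.not_lt_zero _)]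
        · rw [if_neg h3, if_neg h3]
  -- the telescoped functions
  set f : Fin (K i) → ℕ → ℝ :=
    fun c m => F (W m) - F (Function.update (W m) ⟨i,c⟩ 0) with hf
  have hrepr : ∀ (a c : Fin (K i)), ((a = s ∧ c = s') ∨ (a = s' ∧ c = s)) →
      F (U1 y ⟨i,a⟩) - F (U1 (U0 y j) ⟨i,a⟩)
        = (F (W (K j)) - F (W 0)) - (f c (K j) - f c 0) := by
    intro a c hac
    rw [← hWtop a c hac, ← hWbot a c hac, hf]
    ring
  set G : ℕ → ℝ := fun m =>
    if hm : m < K j then (⨆ ℓ : Fin (K i), HI F2 ⟨i,ℓ⟩ ⟨j,⟨m,hm⟩⟩ y) * y ⟨j,⟨m,hm⟩⟩ else 0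
    with hG
  have hstep : ∀ (c : Fin (K i)), (c = s ∨ c = s') →
      ∀ m ∈ Finset.range (K j), |f c (m+1) - f c m| ≤ G m := by
    intro c hc m hmr
    have hm : m < K j := Finset.mem_range.1 hmr
    have hAb : (⟨i,c⟩ : Idx K) ≠ ⟨j,⟨m,hm⟩⟩ := fun h => (hne_is m hm c) h.symm
    have hWmA : W m ⟨i,c⟩ = 1 := hWA m c hc
    have hWmb : W m ⟨j,⟨m,hm⟩⟩ = 0 := hWb m hm
    have hupdA : Function.update (W m) ⟨i,c⟩ 1 = W m := by
      rw [← hWmA]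
      exact Function.update_eq_self _ _
    have e1 : W (m+1) = rect (W m) ⟨i,c⟩ ⟨j,⟨m,hm⟩⟩ 1 (y ⟨j,⟨m,hm⟩⟩) := by
      rw [hWsucc m hm, rect, hupdA]
    have e2 : W m = rect (W m) ⟨i,c⟩ ⟨j,⟨m,hm⟩⟩ 1 0 := by
      rw [rect, hupdA]
      funext r
      by_cases hr : r = (⟨j,⟨m,hm⟩⟩ : Idx K)
      · subst hr
        rw [Function.update_self, hWmb]
      · rw [Function.update_of_ne hr]
    have e3 : Function.update (W (m+1)) ⟨i,c⟩ 0
        = rect (W m) ⟨i,c⟩ ⟨j,⟨m,hm⟩⟩ 0 (y ⟨j,⟨m,hm⟩⟩) := by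
      rw [hWsucc m hm, rect, Function.update_comm hAb]
    have e4 : Function.update (W m) ⟨i,c⟩ 0 = rect (W m) ⟨i,c⟩ ⟨j,⟨m,hm⟩⟩ 0 0 := by
      rw [rect]
      funext r
      by_cases hr : r = (⟨j,⟨m,hm⟩⟩ : Idx K)
      · subst hr
        rw [Function.update_self, Function.update_of_ne (Ne.symm hAb), hWmb]
      · rw [Function.update_of_ne hr]
    have hH : ∀ q ∈ cube K,
        (∀ r, r ≠ (⟨i,c⟩ : Idx K) → r ≠ (⟨j,⟨m,hm⟩⟩ : Idx K) → q r = W m r) →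
        |F2 ⟨i,c⟩ ⟨j,⟨m,hm⟩⟩ q| ≤ HI F2 ⟨i,c⟩ ⟨j,⟨m,hm⟩⟩ y := by
      intro q hq hagree
      apply abs_F2_le_HI hsm.2.2.1
      refine ⟨hq, i, j, fun r hri hrj => ?_⟩
      rw [hagree r (fun h => hri (congrArg Sigma.fst h)) (fun h => hrj (congrArg Sigma.fst h)),
        hWagree m r hri hrj]
    have h01 : (0:ℝ) ∈ Set.Icc (0:ℝ) 1 := Set.left_mem_Icc.2 zero_le_one
    have h11 : (1:ℝ) ∈ Set.Icc (0:ℝ) 1 := Set.right_mem_Icc.2 zero_le_one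
    have hyb : y ⟨j,⟨m,hm⟩⟩ ∈ Set.Icc (0:ℝ) 1 := ⟨(hy _).1, (hy _).2⟩
    have hbd := secondDiff_bound F F1 F2 hsm (W m) (hWcube m) ⟨i,c⟩ ⟨j,⟨m,hm⟩⟩ hAb
      h01 h11 h01 hyb hH
    have eq5 : f c (m+1) - f c m
        = F (rect (W m) ⟨i,c⟩ ⟨j,⟨m,hm⟩⟩ 1 (y ⟨j,⟨m,hm⟩⟩))
          - F (rect (W m) ⟨i,c⟩ ⟨j,⟨m,hm⟩⟩ 0 (y ⟨j,⟨m,hm⟩⟩))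
          - F (rect (W m) ⟨i,c⟩ ⟨j,⟨m,hm⟩⟩ 1 0)
          + F (rect (W m) ⟨i,c⟩ ⟨j,⟨m,hm⟩⟩ 0 0) := by
      rw [hf]
      dsimp only
      rw [← e1, ← e3, ← e2, ← e4]
      ring
    rw [eq5]
    have hGm : G m = (⨆ ℓ : Fin (K i), HI F2 ⟨i,ℓ⟩ ⟨j,⟨m,hm⟩⟩ y) * y ⟨j,⟨m,hm⟩⟩ := by
      rw [hG]
      exact dif_pos hm
    rw [hGm]
    calc |F (rect (W m) ⟨i,c⟩ ⟨j,⟨m,hm⟩⟩ 1 (y ⟨j,⟨m,hm⟩⟩))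
          - F (rect (W m) ⟨i,c⟩ ⟨j,⟨m,hm⟩⟩ 0 (y ⟨j,⟨m,hm⟩⟩))
          - F (rect (W m) ⟨i,c⟩ ⟨j,⟨m,hm⟩⟩ 1 0)
          + F (rect (W m) ⟨i,c⟩ ⟨j,⟨m,hm⟩⟩ 0 0)|
        ≤ HI F2 ⟨i,c⟩ ⟨j,⟨m,hm⟩⟩ y * |1 - 0| * |y ⟨j,⟨m,hm⟩⟩ - 0| := hbd
      _ = HI F2 ⟨i,c⟩ ⟨j,⟨m,hm⟩⟩ y * y ⟨j,⟨m,hm⟩⟩ := by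
          rw [sub_zero, sub_zero, abs_one, abs_of_nonneg (hy _).1, mul_one]
      _ ≤ (⨆ ℓ : Fin (K i), HI F2 ⟨i,ℓ⟩ ⟨j,⟨m,hm⟩⟩ y) * y ⟨j,⟨m,hm⟩⟩ :=
          mul_le_mul_of_nonneg_right (le_ciSup (hbdd _) c) (hy _).1
  have htel : ∀ c : Fin (K i),
      f c (K j) - f c 0 = ∑ m ∈ Finset.range (K j), (f c (m+1) - f c m) :=
    fun c => (Finset.sum_range_sub (f c) (K j)).symm
  have habs : ∀ (c : Fin (K i)), (c = s ∨ c = s') →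
      |f c (K j) - f c 0| ≤ ∑ m ∈ Finset.range (K j), G m := by
    intro c hc
    rw [htel c]
    exact (Finset.abs_sum_le_sum_abs _ _).trans (Finset.sum_le_sum (hstep c hc))
  have hsumG : ∑ m ∈ Finset.range (K j), G m
      = ∑ ℓ' : Fin (K j), (⨆ ℓ : Fin (K i), HI F2 ⟨i,ℓ⟩ ⟨j,ℓ'⟩ y) * y ⟨j,ℓ'⟩ := by
    rw [← Fin.sum_univ_eq_sum_range G (K j)]
    apply Finset.sum_congr rfl
    intro ℓ' _
    rw [hG]
    dsimp only
    rw [dif_pos ℓ'.isLt]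
  rw [hrepr s s' (Or.inl ⟨rfl, rfl⟩), hrepr s' s (Or.inr ⟨rfl, rfl⟩)]
  have e6 : ((F (W (K j)) - F (W 0)) - (f s' (K j) - f s' 0))
      - ((F (W (K j)) - F (W 0)) - (f s (K j) - f s 0))
      = (f s (K j) - f s 0) - (f s' (K j) - f s' 0) := by ring
  rw [e6]
  calc |(f s (K j) - f s 0) - (f s' (K j) - f s' 0)|
      ≤ |f s (K j) - f s 0| + |f s' (K j) - f s' 0| := by
        rw [sub_eq_add_neg]
        exact (abs_add_le _ _).trans (by rw [abs_neg])
    _ ≤ (∑ m ∈ Finset.range (K j), G m) + (∑ m ∈ Finset.range (K j), G m) :=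
        add_le_add (habs s (Or.inl rfl)) (habs s' (Or.inr rfl))
    _ = 2 * ∑ ℓ' : Fin (K j), (⨆ ℓ : Fin (K i), HI F2 ⟨i,ℓ⟩ ⟨j,ℓ'⟩ y) * y ⟨j,ℓ'⟩ := by
        rw [hsumG]; ring

end HelpersC

/-- Lemma 2.4: stability of `T` under zeroing out one row. -/
theorem statement14 (n : ℕ) (K : Fin n → ℕ) (μ : (i : Fin n) → Fin (K i) → ℝ)
    (F : Vec K → ℝ) (F1 : Idx K → Vec K → ℝ) (F2 : Idx K → Idx K → Vec K → ℝ)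
    (hn : 1 ≤ n) (hK : ∀ i, 1 ≤ K i)
    (hμpos : ∀ i ℓ, 0 < μ i ℓ) (hμsum : ∀ i, ∑ ℓ, μ i ℓ = 1)
    (hsmooth : SmoothData F F1 F2) :
    ∀ y ∈ cube K, ∀ (i j : Fin n) (ℓ : Fin (K i)),
      |Tmap μ F (U0 y j) ⟨i, ℓ⟩ - Tmap μ F y ⟨i, ℓ⟩| ≤
        Phi F2 i j y * min (Tmap μ F y ⟨i, ℓ⟩) (Tmap μ F (U0 y j) ⟨i, ℓ⟩) := by
  intro y hy i j ℓ
  have hPhi : Phi F2 i j y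
      = Real.exp (2 * ∑ ℓ' : Fin (K j), (⨆ ℓ : Fin (K i), HI F2 ⟨i,ℓ⟩ ⟨j,ℓ'⟩ y) * y ⟨j,ℓ'⟩) - 1 := rfl
  have hyNI : y ∈ NI y := ⟨hy, i, i, fun _ _ _ => rfl⟩
  have hbdd : ∀ q : Idx K, BddAbove (Set.range fun t : Fin (K i) => HI F2 ⟨i,t⟩ q y) :=
    fun q => Set.Finite.bddAbove (Set.finite_range _)
  have hL0 : 0 ≤ 2 * ∑ ℓ' : Fin (K j), (⨆ ℓ : Fin (K i), HI F2 ⟨i,ℓ⟩ ⟨j,ℓ'⟩ y) * y ⟨j,ℓ'⟩ := by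
    apply mul_nonneg (by norm_num)
    refine Finset.sum_nonneg fun ℓ' _ => mul_nonneg ?_ (hy _).1
    exact le_ciSup_of_le (hbdd _) ℓ
      (le_trans (abs_nonneg _) (abs_F2_le_HI hsmooth.2.2.1 _ _ y hyNI))
  have hTpos : ∀ z : Vec K, 0 < Tmap μ F z ⟨i,ℓ⟩ := by
    intro z
    have hne : (Finset.univ : Finset (Fin (K i))).Nonempty := ⟨ℓ, Finset.mem_univ ℓ⟩
    exact div_pos (mul_pos (Real.exp_pos _) (hμpos i ℓ))
      (Finset.sum_pos (fun t _ => mul_pos (Real.exp_pos _) (hμpos i t)) hne)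
  set L := 2 * ∑ ℓ' : Fin (K j), (⨆ ℓ : Fin (K i), HI F2 ⟨i,ℓ⟩ ⟨j,ℓ'⟩ y) * y ⟨j,ℓ'⟩ with hLdef
  by_cases hji : j = i
  · subst hji
    have hUeq : ∀ t : Fin (K j), U1 (U0 y j) ⟨j,t⟩ = U1 y ⟨j,t⟩ := by
      intro t
      funext r
      show (if r.1 = j then _ else U0 y j r) = (if r.1 = j then _ else y r)
      by_cases hr : r.1 = j
      · rw [if_pos hr, if_pos hr]
      · rw [if_neg hr, if_neg hr]
        show (if r.1 = j then 0 else y r) = y r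
        rw [if_neg hr]
    have hTeq : Tmap μ F (U0 y j) ⟨j,ℓ⟩ = Tmap μ F y ⟨j,ℓ⟩ := by
      show Real.exp (F (U1 (U0 y j) ⟨j,ℓ⟩)) * μ j ℓ / ∑ t : Fin (K j),
          Real.exp (F (U1 (U0 y j) ⟨j,t⟩)) * μ j t = _
      rw [hUeq]
      congr 1
      exact Finset.sum_congr rfl fun t _ => by rw [hUeq]
    rw [hTeq, sub_self, abs_zero]
    apply mul_nonneg
    · rw [hPhi]
      have := Real.one_le_exp hL0
      linarith
    · exact le_min (hTpos _).le (hTpos _).le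
  · have hij : i ≠ j := fun h => hji h.symm
    have hkey : ∀ t t' : Fin (K i),
        |(F (U1 y ⟨i,t⟩) - F (U1 (U0 y j) ⟨i,t⟩)) - (F (U1 y ⟨i,t'⟩) - F (U1 (U0 y j) ⟨i,t'⟩))|
          ≤ L := fun t t' => delta_bound F F1 F2 hsmooth y hy i j hij t t'
    set Av : Fin (K i) → ℝ := fun t => Real.exp (F (U1 y ⟨i,t⟩)) * μ i t with hAv
    set Bv : Fin (K i) → ℝ := fun t => Real.exp (F (U1 (U0 y j) ⟨i,t⟩)) * μ i t with hBv
    have hApos : ∀ t, 0 < Av t := fun t => mul_pos (Real.exp_pos _) (hμpos i t)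
    have hBpos : ∀ t, 0 < Bv t := fun t => mul_pos (Real.exp_pos _) (hμpos i t)
    have hne : (Finset.univ : Finset (Fin (K i))).Nonempty := ⟨ℓ, Finset.mem_univ ℓ⟩
    have hSA : 0 < ∑ t, Av t := Finset.sum_pos (fun t _ => hApos t) hne
    have hSB : 0 < ∑ t, Bv t := Finset.sum_pos (fun t _ => hBpos t) hne
    have hTy : Tmap μ F y ⟨i,ℓ⟩ = Av ℓ / ∑ t, Av t := rfl
    have hTy' : Tmap μ F (U0 y j) ⟨i,ℓ⟩ = Bv ℓ / ∑ t, Bv t := rfl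
    have key1 : ∀ t : Fin (K i), Bv ℓ * Av t ≤ Real.exp L * (Av ℓ * Bv t) := by
      intro t
      have h := abs_le.1 (hkey ℓ t)
      have hexp : Real.exp (F (U1 (U0 y j) ⟨i,ℓ⟩)) * Real.exp (F (U1 y ⟨i,t⟩))
          ≤ Real.exp L * (Real.exp (F (U1 y ⟨i,ℓ⟩)) * Real.exp (F (U1 (U0 y j) ⟨i,t⟩))) := by
        rw [← Real.exp_add, ← Real.exp_add, ← Real.exp_add]
        exact Real.exp_le_exp.2 (by linarith [h.1])
      calc Bv ℓ * Av t
          = (Real.exp (F (U1 (U0 y j) ⟨i,ℓ⟩)) * Real.exp (F (U1 y ⟨i,t⟩))) * (μ i ℓ * μ i t) := by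
            rw [hAv, hBv]; ring
        _ ≤ (Real.exp L * (Real.exp (F (U1 y ⟨i,ℓ⟩)) * Real.exp (F (U1 (U0 y j) ⟨i,t⟩))))
              * (μ i ℓ * μ i t) := by
            exact mul_le_mul_of_nonneg_right hexp
              (mul_nonneg (hμpos i ℓ).le (hμpos i t).le)
        _ = Real.exp L * (Av ℓ * Bv t) := by rw [hAv, hBv]; ring
    have key2 : ∀ t : Fin (K i), Av ℓ * Bv t ≤ Real.exp L * (Bv ℓ * Av t) := by
      intro t
      have h := abs_le.1 (hkey ℓ t)
      have hexp : Real.exp (F (U1 y ⟨i,ℓ⟩)) * Real.exp (F (U1 (U0 y j) ⟨i,t⟩))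
          ≤ Real.exp L * (Real.exp (F (U1 (U0 y j) ⟨i,ℓ⟩)) * Real.exp (F (U1 y ⟨i,t⟩))) := by
        rw [← Real.exp_add, ← Real.exp_add, ← Real.exp_add]
        exact Real.exp_le_exp.2 (by linarith [h.2])
      calc Av ℓ * Bv t
          = (Real.exp (F (U1 y ⟨i,ℓ⟩)) * Real.exp (F (U1 (U0 y j) ⟨i,t⟩))) * (μ i ℓ * μ i t) := by
            rw [hAv, hBv]; ring
        _ ≤ (Real.exp L * (Real.exp (F (U1 (U0 y j) ⟨i,ℓ⟩)) * Real.exp (F (U1 y ⟨i,t⟩))))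
              * (μ i ℓ * μ i t) := by
            exact mul_le_mul_of_nonneg_right hexp
              (mul_nonneg (hμpos i ℓ).le (hμpos i t).le)
        _ = Real.exp L * (Bv ℓ * Av t) := by rw [hAv, hBv]; ring
    have hsum1 : Bv ℓ * ∑ t, Av t ≤ Real.exp L * Av ℓ * ∑ t, Bv t := by
      calc Bv ℓ * ∑ t, Av t = ∑ t, Bv ℓ * Av t := Finset.mul_sum _ _ _
        _ ≤ ∑ t, Real.exp L * (Av ℓ * Bv t) := Finset.sum_le_sum fun t _ => key1 t
        _ = Real.exp L * Av ℓ * ∑ t, Bv t := by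
            rw [← Finset.mul_sum, ← Finset.mul_sum]; ring
    have hsum2 : Av ℓ * ∑ t, Bv t ≤ Real.exp L * Bv ℓ * ∑ t, Av t := by
      calc Av ℓ * ∑ t, Bv t = ∑ t, Av ℓ * Bv t := Finset.mul_sum _ _ _
        _ ≤ ∑ t, Real.exp L * (Bv ℓ * Av t) := Finset.sum_le_sum fun t _ => key2 t
        _ = Real.exp L * Bv ℓ * ∑ t, Av t := by
            rw [← Finset.mul_sum, ← Finset.mul_sum]; ring
    have h1 : Tmap μ F (U0 y j) ⟨i,ℓ⟩ ≤ Real.exp L * Tmap μ F y ⟨i,ℓ⟩ := by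
      rw [hTy, hTy', show Real.exp L * (Av ℓ / ∑ t, Av t) = (Real.exp L * Av ℓ) / ∑ t, Av t from
        (mul_div_assoc _ _ _).symm, div_le_div_iff₀ hSB hSA]
      exact hsum1
    have h2 : Tmap μ F y ⟨i,ℓ⟩ ≤ Real.exp L * Tmap μ F (U0 y j) ⟨i,ℓ⟩ := by
      rw [hTy, hTy', show Real.exp L * (Bv ℓ / ∑ t, Bv t) = (Real.exp L * Bv ℓ) / ∑ t, Bv t from
        (mul_div_assoc _ _ _).symm, div_le_div_iff₀ hSA hSB]
      exact hsum2
    rw [hPhi]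
    rcases le_total (Tmap μ F (U0 y j) ⟨i,ℓ⟩) (Tmap μ F y ⟨i,ℓ⟩) with hc | hc
    · rw [min_eq_right hc, abs_of_nonpos (by linarith), sub_mul, one_mul]
      have h2' : Real.exp L * Tmap μ F (U0 y j) ⟨i,ℓ⟩
          = Real.exp (2 * ∑ ℓ' : Fin (K j), (⨆ ℓ : Fin (K i), HI F2 ⟨i,ℓ⟩ ⟨j,ℓ'⟩ y) * y ⟨j,ℓ'⟩)
            * Tmap μ F (U0 y j) ⟨i,ℓ⟩ := by rw [hLdef]
      linarith [h2, h2'.symm.le]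
    · rw [min_eq_left hc, abs_of_nonneg (by linarith), sub_mul, one_mul]
      have h1' : Real.exp L * Tmap μ F y ⟨i,ℓ⟩
          = Real.exp (2 * ∑ ℓ' : Fin (K j), (⨆ ℓ : Fin (K i), HI F2 ⟨i,ℓ⟩ ⟨j,ℓ'⟩ y) * y ⟨j,ℓ'⟩)
            * Tmap μ F y ⟨i,ℓ⟩ := by rw [hLdef]
      linarith [h1, h1'.symm.le]


end Meta
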